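/- Let G = (V, E) be a finite undirected simple graph and let s ≥ 1 be an integer. Let S ⊆ V, let v ∈ S satisfy |N_G(v) ∩ S| ≤ |S| − s (as integers), and let u ∈ V \ S be a vertex that is not adjacent to v in G. Then S ∪ {u} does not induce an s-bundle in G (justifying the candidate-reduction rule that removes non-neighbors of saturated vertices). -/
import Mathlib


open Finset

variable {V : Type*} [Fintype V] [DecidableEq V]

/-- `S` induces an `s`-bundle in `G`: for every `T ⊆ S` with `|T| < |S| - s`,
the subgraph of `G` induced on `S \ T` is connected. -/
def IsSBundle (G : SimpleGraph V) (s : ℕ) (S : Finset V) : Prop :=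
  ∀ T ⊆ S, (T.card : ℤ) < (S.card : ℤ) - (s : ℤ) →
    (G.induce (↑(S \ T) : Set V)).Connected

/-- Saturated-vertex rule: if `v ∈ S` has at most `|S| - s` neighbors in `S`
and `u ∉ S` is not adjacent to `v`, then `S ∪ {u}` is not an `s`-bundle. -/
theorem saturated_vertex_rule (G : SimpleGraph V) [DecidableRel G.Adj]
    (s : ℕ) (hs : 1 ≤ s) (S : Finset V) (v : V) (hv : v ∈ S)
    (hdeg : ((G.neighborFinset v ∩ S).card : ℤ) ≤ (S.card : ℤ) - (s : ℤ))
    (u : V) (hu : u ∉ S) (hadj : ¬ G.Adj u v) :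
    ¬ IsSBundle G s (insert u S) := by
  intro h
  set T := G.neighborFinset v ∩ S with hT
  have hTsub : T ⊆ insert u S := fun x hx =>
    mem_insert_of_mem (mem_of_mem_inter_right hx)
  have hlt : (T.card : ℤ) < ((insert u S).card : ℤ) - (s : ℤ) := by
    rw [card_insert_of_notMem hu]
    push_cast
    linarith
  have hconn := h T hTsub hlt
  have hvmem : v ∈ insert u S \ T := by
    simp [hT, hv, SimpleGraph.mem_neighborFinset]
  have humem : u ∈ insert u S \ T := by
    simp [hT, hu]
  have hvne : v ≠ u := fun e => hu (e ▸ hv)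
  obtain ⟨p⟩ := hconn.preconnected
    ⟨v, by simpa using hvmem⟩ ⟨u, by simpa using humem⟩
  cases p with
  | nil => exact hvne (by simpa using humem)
  | @cons _ b _ hb q =>
    have hadj' : G.Adj v b.val := hb
    have hbmem : (b : V) ∈ insert u S \ T := by
      have := b.property
      simpa using this
    rcases mem_sdiff.mp hbmem with ⟨hb1, hb2⟩
    rcases mem_insert.mp hb1 with h1 | h1
    · exact hadj (h1 ▸ hadj').symm
    · exact hb2 (by simp [hT, SimpleGraph.mem_neighborFinset, hadj', h1])
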